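/- The stochastic structural operational semantics of the Brane Calculus is conservative with respect to the non-stochastic reduction semantics: for all systems P and Q, if P → μ and μ_id([Q]_≡) > 0, then P ⟶ Q is derivable in the reduction semantics. -/

import Mathlib

open MeasureTheory
open scoped ENNReal

namespace Brane

/-- Action names Λ (a countable set). -/
abbrev Name := ℕ
/-- Node names (for compartments), a countable set disjoint from Λ. -/
abbrev NName := ℕ

/-- Membranes of the Brane Calculus. -/
inductive Membrane : Type
  | zero : Membrane
  | par : Membrane → Membrane → Membrane
  | phago : Name → Membrane → Membrane
  | cophago : Name → Membrane → Membrane → Membrane  -- cophago n τ σ = ⊥phago_n(τ).σ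
  | exo : Name → Membrane → Membrane
  | coexo : Name → Membrane → Membrane
  | pino : Name → Membrane → Membrane → Membrane     -- pino n τ σ = pino_n(τ).σ
deriving DecidableEq

/-- Systems of the Brane Calculus. -/
inductive System : Type
  | void : System
  | comp : System → System → System
  | cell : Membrane → System → System
deriving DecidableEq

/-- Structural congruence on membranes. -/
inductive MCong : Membrane → Membrane → Prop
  | refl (σ) : MCong σ σ
  | symm {σ τ} : MCong σ τ → MCong τ σ
  | trans {σ τ ρ} : MCong σ τ → MCong τ ρ → MCong σ ρ
  | parComm (σ τ) : MCong (Membrane.par σ τ) (Membrane.par τ σ)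
  | parAssoc (σ τ ρ) : MCong (Membrane.par σ (Membrane.par τ ρ)) (Membrane.par (Membrane.par σ τ) ρ)
  | parZero (σ) : MCong (Membrane.par σ .zero) σ
  | par {σ τ} (ρ) : MCong σ τ → MCong (Membrane.par σ ρ) (Membrane.par τ ρ)
  | phago (n) {σ τ} : MCong σ τ → MCong (.phago n σ) (.phago n τ)
  | exo (n) {σ τ} : MCong σ τ → MCong (.exo n σ) (.exo n τ)
  | coexo (n) {σ τ} : MCong σ τ → MCong (.coexo n σ) (.coexo n τ)
  | cophago (n) {ρ ν σ τ} : MCong ρ ν → MCong σ τ → MCong (.cophago n ρ σ) (.cophago n ν τ)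
  | pino (n) {ρ ν σ τ} : MCong ρ ν → MCong σ τ → MCong (.pino n ρ σ) (.pino n ν τ)

/-- Structural congruence on systems. -/
inductive SCong : System → System → Prop
  | refl (P) : SCong P P
  | symm {P Q} : SCong P Q → SCong Q P
  | trans {P Q R} : SCong P Q → SCong Q R → SCong P R
  | compComm (P Q) : SCong (System.comp P Q) (System.comp Q P)
  | compAssoc (P Q R) : SCong (System.comp P (System.comp Q R)) (System.comp (System.comp P Q) R)
  | compVoid (P) : SCong (System.comp P .void) P
  | zeroVoid : SCong (System.cell .zero .void) .void
  | comp {P Q} (R) : SCong P Q → SCong (System.comp P R) (System.comp Q R)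
  | cell {σ τ P Q} : MCong σ τ → SCong P Q → SCong (.cell σ P) (.cell τ Q)

/-- ≡-equivalence class of a membrane. -/
def mcls (σ : Membrane) : Set Membrane := {τ | MCong σ τ}
/-- ≡-equivalence class of a system. -/
def scls (P : System) : Set System := {Q | SCong P Q}

/-- The σ-algebra Π on membranes, generated by the ≡-classes. -/
instance : MeasurableSpace Membrane := .generateFrom {S | ∃ σ, S = mcls σ}
/-- The σ-algebra Π on systems, generated by the ≡-classes. -/
instance : MeasurableSpace System := .generateFrom {S | ∃ P, S = scls P}

/-- The reduction relation of the Brane Calculus. -/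
inductive React : System → System → Prop
  | phago {n ρ τ τ₀ σ σ₀ P Q} :
      React (.comp (.cell ((Membrane.cophago n ρ τ).par τ₀) Q)
                   (.cell ((Membrane.phago n σ).par σ₀) P))
            (.cell (Membrane.par τ τ₀) (.comp (.cell ρ (.cell (Membrane.par σ σ₀) P)) Q))
  | exo {n τ τ₀ σ σ₀ P Q} :
      React (.cell ((Membrane.coexo n τ).par τ₀)
                   (.comp (.cell ((Membrane.exo n σ).par σ₀) P) Q))
            (.comp (.cell (Membrane.par (Membrane.par σ σ₀) (Membrane.par τ τ₀)) Q) P)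
  | pino {n ρ σ σ₀ P} :
      React (.cell ((Membrane.pino n ρ σ).par σ₀) P)
            (.cell (Membrane.par σ σ₀) (.comp (.cell ρ .void) P))
  | loc {P Q} (σ) : React P Q → React (.cell σ P) (.cell σ Q)
  | comp {P Q} (R) : React P Q → React (.comp P R) (.comp Q R)
  | equiv {P P' Q Q'} : SCong P P' → React P' Q' → SCong Q' Q → React P Q

/-- Membrane action labels A_mem. -/
inductive MLabel : Type
  | phago : Name → MLabel
  | exo : Name → MLabel
  | coexo : Name → MLabel
  | cophago : Name → MLabel
  | pino : Name → MLabel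
deriving DecidableEq

/-- System action labels A_sys. -/
inductive SLabel : Type
  | id : SLabel
  | ph : Name → SLabel
  | phB : Name → SLabel
  | ex : Name → SLabel
deriving DecidableEq

/-- Target (product) space of a membrane label, according to its arity. -/
def MLabel.T : MLabel → Type
  | .phago _ => Membrane
  | .exo _ => Membrane
  | .coexo _ => Membrane
  | .cophago _ => Membrane × Membrane
  | .pino _ => Membrane × Membrane

/-- Target (product) space of a system label, according to its arity. -/
def SLabel.T : SLabel → Type
  | .id => System
  | .ph _ => System × System
  | .phB _ => Membrane × Membrane × System × System
  | .ex _ => Membrane × System × System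

instance (a : MLabel) : MeasurableSpace a.T := by
  cases a <;> (dsimp [MLabel.T]; infer_instance)

instance (a : SLabel) : MeasurableSpace a.T := by
  cases a <;> (dsimp [SLabel.T]; infer_instance)

/-- A_mem-indexed families of measures Δ^{A_mem}(B,Π). -/
abbrev MMeas := ∀ a : MLabel, Measure a.T
/-- A_sys-indexed families of measures Δ^{A_sys}(B,Π). -/
abbrev SMeas := ∀ a : SLabel, Measure a.T

/-- Prefix constant [phago_n]_σ. -/
noncomputable def phagoMeas (ι : Name → ℝ≥0∞) (n : Name) (σ : Membrane) : MMeas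
  | .phago m => if n = m then ι n • Measure.dirac σ else 0
  | .exo _ => 0
  | .coexo _ => 0
  | .cophago _ => 0
  | .pino _ => 0

/-- Prefix constant [exo_n]_σ. -/
noncomputable def exoMeas (ι : Name → ℝ≥0∞) (n : Name) (σ : Membrane) : MMeas
  | .exo m => if n = m then ι n • Measure.dirac σ else 0
  | .phago _ => 0
  | .coexo _ => 0
  | .cophago _ => 0
  | .pino _ => 0

/-- Prefix constant [coexo_n]_σ. -/
noncomputable def coexoMeas (ι : Name → ℝ≥0∞) (n : Name) (σ : Membrane) : MMeas
  | .coexo m => if n = m then ι n • Measure.dirac σ else 0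
  | .phago _ => 0
  | .exo _ => 0
  | .cophago _ => 0
  | .pino _ => 0

/-- Prefix constant [cophago_n]_σ^τ. -/
noncomputable def cophagoMeas (ι : Name → ℝ≥0∞) (n : Name) (τ σ : Membrane) : MMeas
  | .cophago m => if n = m then ι n • Measure.dirac (σ, τ) else 0
  | .phago _ => 0
  | .exo _ => 0
  | .coexo _ => 0
  | .pino _ => 0

/-- Prefix constant [pino_n]_σ^τ. -/
noncomputable def pinoMeas (ι : Name → ℝ≥0∞) (n : Name) (τ σ : Membrane) : MMeas
  | .pino m => if n = m then ι n • Measure.dirac (σ, τ) else 0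
  | .phago _ => 0
  | .exo _ => 0
  | .coexo _ => 0
  | .cophago _ => 0

/-- The parallel operator μ ⊕_{σ,τ} μ' on A_mem-indexed families of measures. -/
noncomputable def mpar (μ μ' : MMeas) (σ τ : Membrane) : MMeas
  | .phago n => (μ (.phago n)).map (fun ρ => ρ.par τ) + (μ' (.phago n)).map (fun ρ => ρ.par σ)
  | .exo n => (μ (.exo n)).map (fun ρ => ρ.par τ) + (μ' (.exo n)).map (fun ρ => ρ.par σ)
  | .coexo n => (μ (.coexo n)).map (fun ρ => ρ.par τ) + (μ' (.coexo n)).map (fun ρ => ρ.par σ)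
  | .cophago n =>
      (μ (.cophago n)).map (fun p : Membrane × Membrane => (p.1.par τ, p.2)) +
      (μ' (.cophago n)).map (fun p : Membrane × Membrane => (p.1.par σ, p.2))
  | .pino n =>
      (μ (.pino n)).map (fun p : Membrane × Membrane => (p.1.par τ, p.2)) +
      (μ' (.pino n)).map (fun p : Membrane × Membrane => (p.1.par σ, p.2))

/-- The nesting operator μ ▹_{σ,P} ν on families of measures. -/
noncomputable def mnest (ι : Name → ℝ≥0∞) (μ : SMeas) (ν : MMeas) (σ : Membrane) (P : System) :
    SMeas
  | .ph n => (ν (.phago n) (mcls σ)) • Measure.dirac (System.cell σ P, System.void)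
  | .phB n =>
      ((ν (.cophago n)).prod (Measure.dirac (P, System.void))).map MeasurableEquiv.prodAssoc
  | .ex n => (ν (.exo n)).prod (Measure.dirac (P, System.void))
  | .id =>
      (μ .id).map (fun Q => System.cell σ Q) +
      Measure.sum (fun n : Name =>
        (ν (.pino n)).map (fun p : Membrane × Membrane =>
          System.cell p.1 ((System.cell p.2 System.void).comp P))) +
      Measure.sum (fun n : Name =>
        (ι n)⁻¹ •
          (((μ (.ex n)).prod (ν (.coexo n))).map
            (fun q : (Membrane × System × System) × Membrane =>
              (System.cell (q.1.1.par q.2) q.1.2.2).comp q.1.2.1)))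

/-- The composition operator μ ⊗_{P,Q} μ' on families of measures. -/
noncomputable def mcomp (ι : Name → ℝ≥0∞) (μ μ' : SMeas) (P Q : System) : SMeas
  | .ph n =>
      (μ (.ph n)).map (fun p : System × System => (p.1, p.2.comp Q)) +
      (μ' (.ph n)).map (fun p : System × System => (p.1, p.2.comp P))
  | .phB n =>
      (μ (.phB n)).map
        (fun p : Membrane × Membrane × System × System => (p.1, p.2.1, p.2.2.1, p.2.2.2.comp Q)) +
      (μ' (.phB n)).map
        (fun p : Membrane × Membrane × System × System => (p.1, p.2.1, p.2.2.1, p.2.2.2.comp P))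
  | .ex n =>
      (μ (.ex n)).map (fun p : Membrane × System × System => (p.1, p.2.1, p.2.2.comp Q)) +
      (μ' (.ex n)).map (fun p : Membrane × System × System => (p.1, p.2.1, p.2.2.comp P))
  | .id =>
      (μ .id).map (fun R => R.comp Q) + (μ' .id).map (fun R => R.comp P) +
      Measure.sum (fun n : Name =>
        (ι n)⁻¹ •
          (((μ (.ph n)).prod (μ' (.phB n))).map
            (fun q : (System × System) × (Membrane × Membrane × System × System) =>
              (System.cell q.2.1 ((System.cell q.2.2.1 q.1.1).comp q.2.2.2.1)).comp
                (q.1.2.comp q.2.2.2.2)))) +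
      Measure.sum (fun n : Name =>
        (ι n)⁻¹ •
          (((μ (.phB n)).prod (μ' (.ph n))).map
            (fun q : (Membrane × Membrane × System × System) × (System × System) =>
              (System.cell q.1.1 ((System.cell q.1.2.1 q.2.1).comp q.1.2.2.1)).comp
                (q.1.2.2.2.comp q.2.2))))

/-- The stochastic transition relation σ →_mem μ, given by the SOS rules
(zero), (pref), (pref-arg), (par). -/
inductive MTrans (ι : Name → ℝ≥0∞) : Membrane → MMeas → Prop
  | zero : MTrans ι .zero 0
  | phago {n σ} : MTrans ι (.phago n σ) (phagoMeas ι n σ)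
  | exo {n σ} : MTrans ι (.exo n σ) (exoMeas ι n σ)
  | coexo {n σ} : MTrans ι (.coexo n σ) (coexoMeas ι n σ)
  | cophago {n τ σ} : MTrans ι (.cophago n τ σ) (cophagoMeas ι n τ σ)
  | pino {n τ σ} : MTrans ι (.pino n τ σ) (pinoMeas ι n τ σ)
  | par {σ τ μ μ'} : MTrans ι σ μ → MTrans ι τ μ' → MTrans ι (Membrane.par σ τ) (mpar μ μ' σ τ)

/-- The stochastic transition relation P →_sys μ, given by the SOS rules
(void), (loc), (comp). -/
inductive STrans (ι : Name → ℝ≥0∞) : System → SMeas → Prop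
  | void : STrans ι .void 0
  | cell {σ P ν μ} : MTrans ι σ ν → STrans ι P μ → STrans ι (.cell σ P) (mnest ι μ ν σ P)
  | comp {P Q μ μ'} : STrans ι P μ → STrans ι Q μ' → STrans ι (System.comp P Q) (mcomp ι μ μ' P Q)

end Brane
namespace Brane

/-! ### Normal forms -/

/-- Compose `n` copies of `C` in front of `R`. -/
def prependCopies : ℕ → System → System → System
  | 0, _, R => R
  | n + 1, C, R => System.comp C (prependCopies n C R)

/-- `n` copies of `C` composed in parallel. -/
def copies (n : ℕ) (C : System) : System := prependCopies n C .void

/-- Systems in normal form: n₁·σ₁(|Q₁|) ∘ … ∘ n_k·σ_k(|Q_k|). -/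
inductive NF : Type
  | nil : NF
  | cons (n : ℕ) (σ : Membrane) (inner rest : NF) : NF

/-- Unfolding ⌈Q⌉ of a normal form into a system. -/
def NF.unfold : NF → System
  | .nil => .void
  | .cons n σ Q₁ Q₂ => prependCopies n (System.cell σ Q₁.unfold) Q₂.unfold

/-- The list of top-level cells of a normal form. -/
def NF.cellsList : NF → List (Membrane × NF)
  | .nil => []
  | .cons _ σ Q₁ Q₂ => (σ, Q₁) :: Q₂.cellsList

/-- Well-formedness of normal forms: positive multiplicities, subsystems in
normal form, and pairwise non-congruent top-level cells. -/
inductive NF.Good : NF → Prop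
  | nil : Good .nil
  | cons {n σ Q₁ Q₂} : 0 < n → Good Q₁ → Good Q₂ →
      (∀ p ∈ Q₂.cellsList, ¬ SCong (System.cell σ Q₁.unfold) (System.cell p.1 p.2.unfold)) →
      Good (.cons n σ Q₁ Q₂)

/-! ### Species -/

/-- Actions (prefix-headed membranes). -/
inductive Action : Type
  | phago : Name → Membrane → Action
  | cophago : Name → Membrane → Membrane → Action
  | exo : Name → Membrane → Action
  | coexo : Name → Membrane → Action
  | pino : Name → Membrane → Membrane → Action
deriving DecidableEq

/-- The membrane denoted by an action. -/
def Action.toMem : Action → Membrane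
  | .phago n σ => .phago n σ
  | .cophago n ρ σ => .cophago n ρ σ
  | .exo n σ => .exo n σ
  | .coexo n σ => .coexo n σ
  | .pino n ρ σ => .pino n ρ σ

/-- A species C(|^x_y|) : a complex located in compartment x with inner compartment y. -/
structure Species : Type where
  C : Finset Action
  x : NName
  y : NName
deriving DecidableEq

/-- Populations: finite multisets of species. -/
abbrev Population := Species →₀ ℕ

/-- Node names occurring in a population. -/
def pfnPop (S : Population) : Finset NName := S.support.biUnion fun I => {I.x, I.y}

/-- The function s(·) mapping a membrane to a complex. -/
def complexOf : Membrane → Finset Action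
  | .zero => ∅
  | .par σ τ => complexOf σ ∪ complexOf τ
  | .phago n σ => {Action.phago n σ}
  | .cophago n ρ σ => {Action.cophago n ρ σ}
  | .exo n σ => {Action.exo n σ}
  | .coexo n σ => {Action.coexo n σ}
  | .pino n ρ σ => {Action.pino n ρ σ}

/-- The translation species_{E,x}(Q) of a normal form into a species population
(relational because of the choice of fresh names). -/
inductive NFSpecies : Finset NName → NName → NF → Population → Prop
  | nil {E x} : NFSpecies E x .nil 0
  | cons {E : Finset NName} {x : NName} {n σ Q₁ Q₂ y J₁ J₂} :
      y ∉ E →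
      NFSpecies (insert y E) y Q₁ J₁ →
      NFSpecies E x Q₂ J₂ →
      (pfnPop J₁ ∩ pfnPop J₂ ⊆ {x}) →
      NFSpecies E x (.cons n σ Q₁ Q₂)
        (Finsupp.single ⟨complexOf σ, x, y⟩ n + J₁ + J₂)

/-- species_{∅,x}(P): translation of a system `P` (via a normal form of `P`)
into a species population located at `x`. -/
def SpeciesOfSys (x : NName) (P : System) (J : Population) : Prop :=
  ∃ Q : NF, NF.Good Q ∧ SCong Q.unfold P ∧ NFSpecies {x} x Q J

/-- A root name of a species population. -/
def IsRoot (S : Population) (x : NName) : Prop :=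
  (∃ I ∈ S.support, I.x = x) ∧ ∀ I ∈ S.support, I.y ≠ x

/-! ### Decoding -/

/-- Decoding ⟪C⟫ of a complex into a membrane. -/
noncomputable def decodeComplex (C : Finset Action) : Membrane :=
  (C.toList.map Action.toMem).foldr Membrane.par .zero

/-- The species of `S` located at `x`. -/
def speciesAt (S : Population) (x : NName) : Finset Species :=
  S.support.filter fun I => I.x = x

mutual
/-- Decoding ⟪S⟫_x of a species population into a system (relational; it is
defined exactly when the nesting structure of `S` below `x` is well founded). -/
inductive Decodes : Population → NName → System → Prop
  | mk {S : Population} {x : NName} {l : List Species} {P : System} :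
      l.Perm (speciesAt S x).toList → DecList S l P → Decodes S x P

/-- Decoding of a list of species (one top-level compartment each). -/
inductive DecList : Population → List Species → System → Prop
  | nil {S} : DecList S [] .void
  | cons {S : Population} {I : Species} {l : List Species} {P' Q : System} :
      Decodes S I.y P' → DecList S l Q →
      DecList S (I :: l)
        (System.comp (copies (S I) (System.cell (decodeComplex I.C) P')) Q)
end

end Brane
namespace Brane

/-! ### The COW Generic Stochastic Abstract Machine (Brane Calculus instance) -/

/-- A reaction O = (S₁, r, f, S₂); the global update function f is, in the Brane
Calculus instantiation, either the identity (`none`) or a substitution of node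
names T[w := x] (`some (w, x)`). -/
structure Reaction : Type where
  reac : Population
  rate : ℝ≥0∞
  upd : Option (NName × NName)
  prod : Population

/-- An activity: the scheduled time t' and the propensity a of a reaction. -/
abbrev Activity := ℝ × ℝ≥0∞

/-- The reaction map R, associating activities to reactions. -/
abbrev RMap := List (Reaction × Activity)

/-- A machine term E ⊢ (t, S, R). -/
structure MachTerm : Type where
  env : Finset NName
  time : ℝ
  pop : Population
  rxns : RMap

/-- A machine state (t, S, R). -/
abbrev MState := ℝ × Population × RMap

/-- S*(I): population of a species multiplied along the chain of enclosing
compartments up to the root. -/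
inductive StarPop (S : Population) : Species → ℕ → Prop
  | root {I} : (∀ J ∈ S.support, J.y ≠ I.x) → StarPop S I (S I)
  | step {I J m} : J ∈ S.support → J.y = I.x → StarPop S J m → StarPop S I (S I * m)

/-- The mass-action propensity of a reaction in population `S`. -/
def PropensityIs (O : Reaction) (S : Population) (a : ℝ≥0∞) : Prop :=
  ∃ g : Species → ℕ,
    (∀ I ∈ O.reac.support, StarPop S I (g I)) ∧
    a = O.rate * ∏ I ∈ O.reac.support, ((g I).choose (O.reac I) : ℝ≥0∞)

/-- init(L,(t,S,R)): schedule each reaction of `L` with its propensity in `S`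
and a stochastic delay. -/
def InitRel (t : ℝ) (S : Population) (L : List Reaction) (out : RMap) : Prop :=
  List.Forall₂
    (fun O q => q.1 = O ∧ PropensityIs O S q.2.2 ∧ ∃ d : ℝ, 0 ≤ d ∧ q.2.1 = t + d) L out

/-- updates(I,(t,S,R)): recompute the activities of the reactions involving `I`. -/
def UpdatesSpec (Iu : Species) (t : ℝ) (S : Population) (R out : RMap) : Prop :=
  List.Forall₂
    (fun p q => q.1 = p.1 ∧ PropensityIs p.1 S q.2.2 ∧
      (if t < p.2.1 then q.2.1 = t + ((p.2.2 / q.2.2).toReal) * (p.2.1 - t)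
       else ∃ d : ℝ, 0 ≤ d ∧ q.2.1 = t + d))
    (R.filter fun p => decide (0 < p.1.reac Iu)) out

open Classical in
/-- Right-biased union R ∪ R' of reaction maps. -/
noncomputable def override (R R' : RMap) : RMap :=
  R' ++ R.filter fun p => decide (∀ q ∈ R', q.1 ≠ p.1)

/-- The reactions of the Brane Calculus instantiation: unary pinocytosis and
binary exocytosis/phagocytosis reactions of the (new) species `I₁` against the
population `S`, with rates given by ι. -/
inductive ReactionOf (ι : Name → ℝ≥0∞) (E : Finset NName) (I₁ : Species) (S : Population) :
    Reaction → Prop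
  | pino {n ρ σ w} :
      Action.pino n ρ σ ∈ I₁.C → w ∉ E →
      ReactionOf ι E I₁ S
        ⟨Finsupp.single I₁ 1, ι n, none,
          Finsupp.single ⟨complexOf σ ∪ I₁.C.erase (.pino n ρ σ), I₁.x, I₁.y⟩ 1 +
          Finsupp.single ⟨complexOf ρ, I₁.y, w⟩ 1⟩
  | exoUp {n τ σ I₂} :
      I₂ ∈ S.support → Action.coexo n τ ∈ I₁.C → Action.exo n σ ∈ I₂.C → I₂.x = I₁.y →
      ReactionOf ι E I₁ S
        ⟨Finsupp.single I₁ 1 + Finsupp.single I₂ 1, ι n, some (I₂.y, I₁.x),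
          Finsupp.single
            ⟨(complexOf τ ∪ I₁.C.erase (.coexo n τ)) ∪ (complexOf σ ∪ I₂.C.erase (.exo n σ)),
              I₁.x, I₁.y⟩ 1⟩
  | exoDown {n τ σ I₂} :
      I₂ ∈ S.support → Action.coexo n τ ∈ I₂.C → Action.exo n σ ∈ I₁.C → I₁.x = I₂.y →
      ReactionOf ι E I₁ S
        ⟨Finsupp.single I₁ 1 + Finsupp.single I₂ 1, ι n, some (I₁.y, I₂.x),
          Finsupp.single
            ⟨(complexOf τ ∪ I₂.C.erase (.coexo n τ)) ∪ (complexOf σ ∪ I₁.C.erase (.exo n σ)),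
              I₂.x, I₂.y⟩ 1⟩
  | phagoL {n ρ τ σ I₂ w} :
      I₂ ∈ S.support → Action.cophago n ρ τ ∈ I₁.C → Action.phago n σ ∈ I₂.C →
      I₂.x = I₁.x → w ∉ E →
      ReactionOf ι E I₁ S
        ⟨Finsupp.single I₁ 1 + Finsupp.single I₂ 1, ι n, none,
          Finsupp.single ⟨complexOf τ ∪ I₁.C.erase (.cophago n ρ τ), I₁.x, I₁.y⟩ 1 +
          Finsupp.single ⟨complexOf ρ, I₁.y, w⟩ 1 +
          Finsupp.single ⟨complexOf σ ∪ I₂.C.erase (.phago n σ), w, I₂.y⟩ 1⟩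
  | phagoR {n ρ τ σ I₂ w} :
      I₂ ∈ S.support → Action.cophago n ρ τ ∈ I₂.C → Action.phago n σ ∈ I₁.C →
      I₂.x = I₁.x → w ∉ E →
      ReactionOf ι E I₁ S
        ⟨Finsupp.single I₁ 1 + Finsupp.single I₂ 1, ι n, none,
          Finsupp.single ⟨complexOf τ ∪ I₂.C.erase (.cophago n ρ τ), I₂.x, I₂.y⟩ 1 +
          Finsupp.single ⟨complexOf ρ, I₂.y, w⟩ 1 +
          Finsupp.single ⟨complexOf σ ∪ I₁.C.erase (.phago n σ), w, I₁.y⟩ 1⟩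

/-- `L` is (a representative listing of) reactions(I ↦ i, S). -/
def ReactionsSpec (ι : Name → ℝ≥0∞) (E : Finset NName) (I : Species) (S : Population)
    (L : List Reaction) : Prop :=
  (∀ O ∈ L, ReactionOf ι E I S O) ∧
  (∀ O, ReactionOf ι E I S O → ∃ O' ∈ L, O'.reac = O.reac ∧ O'.rate = O.rate)

/-- The operation I ↦ i ⊕ (t, S, R). -/
inductive OPlusOne (ι : Name → ℝ≥0∞) (E : Finset NName) : Species → ℕ → MState → MState → Prop
  | old {I : Species} {i : ℕ} {t S R out} :
      I ∈ S.support →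
      UpdatesSpec I t (S + Finsupp.single I i) R out →
      OPlusOne ι E I i (t, S, R) (t, S + Finsupp.single I i, override R out)
  | new {I : Species} {i : ℕ} {t S R L out} :
      I ∉ S.support →
      ReactionsSpec ι E I S L →
      InitRel t (S + Finsupp.single I i) L out →
      OPlusOne ι E I i (t, S, R) (t, S + Finsupp.single I i, R ++ out)

/-- The operation (t, S, R) ⊖ I ↦ i. -/
inductive OMinusOne : Species → ℕ → MState → MState → Prop
  | mk {I : Species} {i : ℕ} {t S R out} :
      i ≤ S I →
      UpdatesSpec I t (Finsupp.update S I (S I - i)) R out →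
      OMinusOne I i (t, S, R) (t, Finsupp.update S I (S I - i), override R out)

/-- Iterated ⊕ of a population listed as (species, multiplicity) pairs. -/
inductive OPlusStar (ι : Name → ℝ≥0∞) (E : Finset NName) :
    List (Species × ℕ) → MState → MState → Prop
  | nil {st} : OPlusStar ι E [] st st
  | cons {I i l st st' st''} :
      OPlusOne ι E I i st st' → OPlusStar ι E l st' st'' →
      OPlusStar ι E ((I, i) :: l) st st''

/-- Iterated ⊖ of a population listed as (species, multiplicity) pairs. -/
inductive OMinusStar : List (Species × ℕ) → MState → MState → Prop
  | nil {st} : OMinusStar [] st st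
  | cons {I i l st st' st''} :
      OMinusOne I i st st' → OMinusStar l st' st'' →
      OMinusStar ((I, i) :: l) st st''

/-- List the species of a population together with their multiplicities. -/
noncomputable def popToList (S : Population) : List (Species × ℕ) :=
  S.support.toList.map fun I => (I, S I)

/-- `Reach S x z`: compartment `z` is (hereditarily) nested inside compartment `x`. -/
inductive Reach (S : Population) : NName → NName → Prop
  | refl (x) : Reach S x x
  | step {x : NName} {I : Species} : Reach S x I.x → I ∈ S.support → Reach S x I.y

open Classical in
/-- The copy (under the renaming `g`) of the subtree of `S` rooted at `y`. -/
noncomputable def copySub (g : NName → NName) (S : Population) (y : NName) : Population :=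
  S.sum fun I n => if Reach S y I.x then Finsupp.single ⟨I.C, g I.x, g I.y⟩ n else 0

/-- dup(E ⊢ (t,S,R), y, y'): deep duplication of the subtree rooted at `y` as a
new subtree rooted at `y'`, initializing the reactions of the new species. -/
def DupRel (ι : Name → ℝ≥0∞) (E : Finset NName) (t : ℝ) (S : Population) (R : RMap)
    (y y' : NName) (E' : Finset NName) (S' : Population) (R' : RMap) : Prop :=
  ∃ g : NName → NName,
    g y = y' ∧
    (∀ z, Reach S y z → z ≠ y → g z ∉ E) ∧
    (∀ z w, Reach S y z → Reach S y w → g z = g w → z = w) ∧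
    S' = S + copySub g S y ∧
    E' = E ∪ pfnPop S' ∧
    ∃ L out,
      (∀ O ∈ L, ∃ I ∈ (copySub g S y).support, ReactionOf ι E' I S' O) ∧
      (∀ I ∈ (copySub g S y).support, ∀ O, ReactionOf ι E' I S' O →
        ∃ O' ∈ L, O'.reac = O.reac ∧ O'.rate = O.rate) ∧
      InitRel t S' L out ∧ R' = R ++ out

/-- Split the multiplicity of the species `I`, keeping `keep` instances with the
old inner name and giving the remaining instances a fresh inner name, and deep
copy the tree hanging below `I` for the new instances. -/
def SplitCopy (ι : Name → ℝ≥0∞) (m : MachTerm) (I : Species) (keep : ℕ) (fresh : NName)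
    (m' : MachTerm) : Prop :=
  fresh ∉ m.env ∧
  ∃ S₀ E' S' R',
    S₀ = Finsupp.update m.pop I keep + Finsupp.single ⟨I.C, I.x, fresh⟩ (m.pop I - keep) ∧
    DupRel ι (insert fresh m.env) m.time S₀ m.rxns I.y fresh E' S' R' ∧
    ∃ L out,
      ReactionsSpec ι E' ⟨I.C, I.x, fresh⟩ S₀ L ∧
      InitRel m.time S' L out ∧
      m' = ⟨E', m.time, S', R' ++ out⟩

/-- The parent-unfolding step of cow: if the compartment `y` lies inside a
compartment with multiplicity > 1, split off a private copy of the parent. -/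
def ParentSplit (ι : Name → ℝ≥0∞) (m : MachTerm) (y : NName) (m' : MachTerm) : Prop :=
  ((∀ Ip ∈ m.pop.support, Ip.y = y → m.pop Ip ≤ 1) ∧ m' = m) ∨
  (∃ Ip ∈ m.pop.support, Ip.y = y ∧ 1 < m.pop Ip ∧ ∃ y', SplitCopy ι m Ip 1 y' m')

/-- The cow step for a single reactant species `I` with multiplicity `j`. -/
def CowStep (ι : Name → ℝ≥0∞) (m : MachTerm) (Ij : Species × ℕ) (m' : MachTerm) : Prop :=
  ∃ m₁, ParentSplit ι m Ij.1.x m₁ ∧ ∃ z', SplitCopy ι m₁ Ij.1 Ij.2 z' m'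

/-- cow(E ⊢ (t,S,R), S₁): copy-on-write unfolding of all the compartments
occurring in the reactant population. -/
inductive CowRel (ι : Name → ℝ≥0∞) : MachTerm → List (Species × ℕ) → MachTerm → Prop
  | nil {m} : CowRel ι m [] m
  | cons {m Ij l m' m''} :
      CowStep ι m Ij m' → CowRel ι m' l m'' → CowRel ι m ((Ij.1, Ij.2) :: l) m''

/-- Apply a node-name substitution. -/
def rn : Option (NName × NName) → NName → NName
  | none, z => z
  | some (w, x), z => if z = w then x else z

def renSpecies (f : Option (NName × NName)) (I : Species) : Species :=
  ⟨I.C, rn f I.x, rn f I.y⟩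

noncomputable def renPop (f : Option (NName × NName)) (S : Population) : Population :=
  Finsupp.mapDomain (renSpecies f) S

noncomputable def renReaction (f : Option (NName × NName)) (O : Reaction) : Reaction :=
  ⟨renPop f O.reac, O.rate, O.upd, renPop f O.prod⟩

noncomputable def renRMap (f : Option (NName × NName)) (R : RMap) : RMap :=
  R.map fun p => (renReaction f p.1, p.2)

/-- Apply the global update function f of a reaction to a machine term. -/
noncomputable def applyUpd (f : Option (NName × NName)) (m : MachTerm) : MachTerm :=
  ⟨m.env.image (rn f), m.time, renPop f m.pop, renRMap f m.rxns⟩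

/-- The transition relation T →^{a,O} T' of the COWGSAM (with the Next Reaction
method and the identity normalization function). -/
inductive MachStep (ι : Name → ℝ≥0∞) : MachTerm → ℝ≥0∞ → Reaction → MachTerm → Prop
  | mk {m : MachTerm} {O : Reaction} {a : ℝ≥0∞} {t' : ℝ} {mc : MachTerm} {st₁ st₂ : MState} :
      (O, (t', a)) ∈ m.rxns →
      (∀ p ∈ m.rxns, t' ≤ p.2.1) →
      CowRel ι m (popToList O.reac) mc →
      OMinusStar (popToList O.reac) (t', mc.pop, mc.rxns) st₁ →
      OPlusStar ι mc.env (popToList O.prod) st₁ st₂ →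
      MachStep ι m a O
        (applyUpd O.upd ⟨mc.env ∪ pfnPop O.prod, st₂.1, st₂.2.1, st₂.2.2⟩)

/-- The initial machine term ⟦P⟧_x = fn(J) ⊢ J ⊕ (0, ∅, ∅), J = species_{∅,x}(P). -/
def InitMach (ι : Name → ℝ≥0∞) (x : NName) (P : System) (m : MachTerm) : Prop :=
  ∃ (J : Population) (st : MState),
    SpeciesOfSys x P J ∧
    OPlusStar ι (pfnPop J) (popToList J) (0, 0, []) st ∧
    m = ⟨pfnPop J, st.1, st.2.1, st.2.2⟩

end Brane

namespace Brane

/-! ### Auxiliary development -/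

section Aux

/-- Encoding of membranes into ℕ. -/
def Membrane.enc : Membrane → ℕ
  | .zero => Nat.pair 0 0
  | .par a b => Nat.pair 1 (Nat.pair a.enc b.enc)
  | .phago n a => Nat.pair 2 (Nat.pair n a.enc)
  | .cophago n a b => Nat.pair 3 (Nat.pair n (Nat.pair a.enc b.enc))
  | .exo n a => Nat.pair 4 (Nat.pair n a.enc)
  | .coexo n a => Nat.pair 5 (Nat.pair n a.enc)
  | .pino n a b => Nat.pair 6 (Nat.pair n (Nat.pair a.enc b.enc))

theorem Membrane.enc_inj : ∀ a b : Membrane, a.enc = b.enc → a = b := by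
  intro a
  induction a with
  | zero => intro b h; cases b <;> simp [Membrane.enc, Nat.pair_eq_pair] at h <;> rfl
  | par a b iha ihb =>
      intro c h; cases c <;> simp [Membrane.enc, Nat.pair_eq_pair] at h
      rw [iha _ h.1, ihb _ h.2]
  | phago n a ih =>
      intro c h; cases c <;> simp [Membrane.enc, Nat.pair_eq_pair] at h
      rw [h.1, ih _ h.2]
  | cophago n a b iha ihb =>
      intro c h; cases c <;> simp [Membrane.enc, Nat.pair_eq_pair] at h
      rw [h.1, iha _ h.2.1, ihb _ h.2.2]
  | exo n a ih =>
      intro c h; cases c <;> simp [Membrane.enc, Nat.pair_eq_pair] at h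
      rw [h.1, ih _ h.2]
  | coexo n a ih =>
      intro c h; cases c <;> simp [Membrane.enc, Nat.pair_eq_pair] at h
      rw [h.1, ih _ h.2]
  | pino n a b iha ihb =>
      intro c h; cases c <;> simp [Membrane.enc, Nat.pair_eq_pair] at h
      rw [h.1, iha _ h.2.1, ihb _ h.2.2]

instance : Countable Membrane := ⟨⟨Membrane.enc, fun _ _ h => Membrane.enc_inj _ _ h⟩⟩

/-- Encoding of systems into ℕ. -/
def System.enc : System → ℕ
  | .void => Nat.pair 0 0
  | .comp a b => Nat.pair 1 (Nat.pair a.enc b.enc)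
  | .cell m a => Nat.pair 2 (Nat.pair m.enc a.enc)

theorem System.enc_inj : ∀ a b : System, a.enc = b.enc → a = b := by
  intro a
  induction a with
  | void => intro b h; cases b <;> simp [System.enc, Nat.pair_eq_pair] at h <;> rfl
  | comp a b iha ihb =>
      intro c h; cases c <;> simp [System.enc, Nat.pair_eq_pair] at h
      rw [iha _ h.1, ihb _ h.2]
  | cell m a ih =>
      intro c h; cases c <;> simp [System.enc, Nat.pair_eq_pair] at h
      rw [Membrane.enc_inj _ _ h.1, ih _ h.2]

instance : Countable System := ⟨⟨System.enc, fun _ _ h => System.enc_inj _ _ h⟩⟩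

end Aux

section Cong

theorem MCong.parCongr {σ σ' τ τ' : Membrane} (h1 : MCong σ σ') (h2 : MCong τ τ') :
    MCong (σ.par τ) (σ'.par τ') :=
  ((h1.par τ).trans (MCong.parComm σ' τ)).trans (((h2.par σ').trans (MCong.parComm τ' σ')))

theorem MCong.assoc' (σ τ ρ : Membrane) :
    MCong ((σ.par τ).par ρ) (σ.par (τ.par ρ)) := (MCong.parAssoc σ τ ρ).symm

theorem SCong.compCongr {P P' Q Q' : System} (h1 : SCong P P') (h2 : SCong Q Q') :
    SCong (P.comp Q) (P'.comp Q') :=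
  ((h1.comp Q).trans (SCong.compComm P' Q)).trans (((h2.comp P').trans (SCong.compComm Q' P')))

theorem SCong.assoc' (P Q R : System) :
    SCong ((P.comp Q).comp R) (P.comp (Q.comp R)) := (SCong.compAssoc P Q R).symm

/-- (a∘b)∘(c∘d) ≡ (a∘c)∘(b∘d) -/
theorem SCong.exchange (a b c d : System) :
    SCong ((a.comp b).comp (c.comp d)) ((a.comp c).comp (b.comp d)) := by
  refine (SCong.assoc' a b (c.comp d)).trans (SCong.trans ?_ (SCong.compAssoc a c (b.comp d)))
  refine SCong.compCongr (SCong.refl a) ?_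
  exact ((SCong.compAssoc b c d).trans (SCong.compCongr (SCong.compComm b c) (SCong.refl d))).trans
    (SCong.assoc' c b d)

/-- (a∘b)∘(c∘d) ≡ (c∘a)∘(b∘d) -/
theorem SCong.exchange' (a b c d : System) :
    SCong ((a.comp b).comp (c.comp d)) ((c.comp a).comp (b.comp d)) :=
  (SCong.exchange a b c d).trans (SCong.compCongr (SCong.compComm a c) (SCong.refl _))

end Cong

section Meas

/-- Congruence structure on a measurable space: a reflexive, symmetric, transitive
relation whose classes are measurable. -/
class CongCl (α : Type*) [MeasurableSpace α] where
  rel : α → α → Prop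
  rrefl : ∀ a, rel a a
  rtrans : ∀ {a b c}, rel a b → rel b c → rel a c
  rsymm : ∀ {a b}, rel a b → rel b a
  meas_cls : ∀ a : α, MeasurableSet {b | rel a b}

open CongCl

instance : CongCl Membrane where
  rel := MCong
  rrefl := MCong.refl
  rtrans := MCong.trans
  rsymm := MCong.symm
  meas_cls a := MeasurableSpace.measurableSet_generateFrom ⟨a, rfl⟩

instance : CongCl System where
  rel := SCong
  rrefl := SCong.refl
  rtrans := SCong.trans
  rsymm := SCong.symm
  meas_cls a := MeasurableSpace.measurableSet_generateFrom ⟨a, rfl⟩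

instance {α β : Type*} [MeasurableSpace α] [MeasurableSpace β] [CongCl α] [CongCl β] :
    CongCl (α × β) where
  rel p q := rel p.1 q.1 ∧ rel p.2 q.2
  rrefl p := ⟨rrefl p.1, rrefl p.2⟩
  rtrans h1 h2 := ⟨rtrans h1.1 h2.1, rtrans h1.2 h2.2⟩
  rsymm h := ⟨rsymm h.1, rsymm h.2⟩
  meas_cls p := by
    have : {b | rel p.1 b.1 ∧ rel p.2 b.2} = {b | rel p.1 b} ×ˢ {b | rel p.2 b} := rfl
    rw [this]
    exact (meas_cls p.1).prod (meas_cls p.2)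

/-- A set closed under the congruence is measurable. -/
theorem measurableSet_of_closed {α : Type*} [MeasurableSpace α] [CongCl α] [Countable α]
    {S : Set α} (h : ∀ a ∈ S, ∀ b, rel a b → b ∈ S) : MeasurableSet S := by
  have hS : S = ⋃ a : S, {b | rel a.1 b} := by
    ext x; constructor
    · intro hx; exact Set.mem_iUnion.2 ⟨⟨x, hx⟩, rrefl x⟩
    · intro hx
      obtain ⟨a, ha⟩ := Set.mem_iUnion.1 hx
      exact h a.1 a.2 x ha
  rw [hS]
  exact MeasurableSet.iUnion fun a => meas_cls a.1

theorem measurable_of_resp_scong {α : Type*} [MeasurableSpace α] [CongCl α] [Countable α]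
    {f : α → System} (hf : ∀ a b, rel a b → SCong (f a) (f b)) : Measurable f := by
  refine @measurable_generateFrom _ _ _ {S | ∃ P, S = scls P} f ?_
  rintro t ⟨P, rfl⟩
  refine measurableSet_of_closed ?_
  intro a ha b hab
  exact SCong.trans ha (hf a b hab)

theorem measurable_of_resp_mcong {α : Type*} [MeasurableSpace α] [CongCl α] [Countable α]
    {f : α → Membrane} (hf : ∀ a b, rel a b → MCong (f a) (f b)) : Measurable f := by
  refine @measurable_generateFrom _ _ _ {S | ∃ σ, S = mcls σ} f ?_
  rintro t ⟨σ, rfl⟩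
  refine measurableSet_of_closed ?_
  intro a ha b hab
  exact MCong.trans ha (hf a b hab)

end Meas

section Res

open CongCl

/-- Residuals of a phago_n action of a membrane. -/
def PhagoRes (n : Name) (σ ρ : Membrane) : Prop :=
  ∃ s s₀, MCong σ ((Membrane.phago n s).par s₀) ∧ MCong ρ (s.par s₀)

def ExoRes (n : Name) (σ ρ : Membrane) : Prop :=
  ∃ s s₀, MCong σ ((Membrane.exo n s).par s₀) ∧ MCong ρ (s.par s₀)

def CoexoRes (n : Name) (σ ρ : Membrane) : Prop :=
  ∃ s s₀, MCong σ ((Membrane.coexo n s).par s₀) ∧ MCong ρ (s.par s₀)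

def CophRes (n : Name) (σ : Membrane) (p : Membrane × Membrane) : Prop :=
  ∃ r s s₀, MCong σ ((Membrane.cophago n r s).par s₀) ∧ MCong p.1 (s.par s₀) ∧ MCong p.2 r

def PinoRes (n : Name) (σ : Membrane) (p : Membrane × Membrane) : Prop :=
  ∃ r s s₀, MCong σ ((Membrane.pino n r s).par s₀) ∧ MCong p.1 (s.par s₀) ∧ MCong p.2 r

def PhRes (n : Name) (P : System) (p : System × System) : Prop :=
  ∃ s s₀ M R, SCong P ((System.cell ((Membrane.phago n s).par s₀) M).comp R) ∧
    SCong p.1 (System.cell (s.par s₀) M) ∧ SCong p.2 R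

def PhBRes (n : Name) (P : System) (q : Membrane × Membrane × System × System) : Prop :=
  ∃ r s s₀ M R, SCong P ((System.cell ((Membrane.cophago n r s).par s₀) M).comp R) ∧
    MCong q.1 (s.par s₀) ∧ MCong q.2.1 r ∧ SCong q.2.2.1 M ∧ SCong q.2.2.2 R

def ExRes (n : Name) (P : System) (q : Membrane × System × System) : Prop :=
  ∃ s s₀ M R, SCong P ((System.cell ((Membrane.exo n s).par s₀) M).comp R) ∧
    MCong q.1 (s.par s₀) ∧ SCong q.2.1 M ∧ SCong q.2.2 R

/-! Closure of the residual relations under congruence of the residual. -/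

theorem PhagoRes.closed {n σ ρ ρ'} (h : PhagoRes n σ ρ) (hc : MCong ρ ρ') : PhagoRes n σ ρ' :=
  let ⟨s, s₀, h1, h2⟩ := h; ⟨s, s₀, h1, hc.symm.trans h2⟩

theorem ExoRes.closed {n σ ρ ρ'} (h : ExoRes n σ ρ) (hc : MCong ρ ρ') : ExoRes n σ ρ' :=
  let ⟨s, s₀, h1, h2⟩ := h; ⟨s, s₀, h1, hc.symm.trans h2⟩

theorem CoexoRes.closed {n σ ρ ρ'} (h : CoexoRes n σ ρ) (hc : MCong ρ ρ') : CoexoRes n σ ρ' :=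
  let ⟨s, s₀, h1, h2⟩ := h; ⟨s, s₀, h1, hc.symm.trans h2⟩

theorem CophRes.closed {n σ p p'} (h : CophRes n σ p) (hc : rel p p') : CophRes n σ p' :=
  let ⟨r, s, s₀, h1, h2, h3⟩ := h
  ⟨r, s, s₀, h1, (MCong.symm hc.1).trans h2, (MCong.symm hc.2).trans h3⟩

theorem PinoRes.closed {n σ p p'} (h : PinoRes n σ p) (hc : rel p p') : PinoRes n σ p' :=
  let ⟨r, s, s₀, h1, h2, h3⟩ := h
  ⟨r, s, s₀, h1, (MCong.symm hc.1).trans h2, (MCong.symm hc.2).trans h3⟩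

theorem PhRes.closed {n P p p'} (h : PhRes n P p) (hc : rel p p') : PhRes n P p' :=
  let ⟨s, s₀, M, R, h1, h2, h3⟩ := h
  ⟨s, s₀, M, R, h1, (SCong.symm hc.1).trans h2, (SCong.symm hc.2).trans h3⟩

theorem PhBRes.closed {n P q q'} (h : PhBRes n P q) (hc : rel q q') : PhBRes n P q' :=
  let ⟨r, s, s₀, M, R, h1, h2, h3, h4, h5⟩ := h
  ⟨r, s, s₀, M, R, h1, (MCong.symm hc.1).trans h2, (MCong.symm hc.2.1).trans h3,
    (SCong.symm hc.2.2.1).trans h4, (SCong.symm hc.2.2.2).trans h5⟩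

theorem ExRes.closed {n P q q'} (h : ExRes n P q) (hc : rel q q') : ExRes n P q' :=
  let ⟨s, s₀, M, R, h1, h2, h3, h4⟩ := h
  ⟨s, s₀, M, R, h1, (MCong.symm hc.1).trans h2, (SCong.symm hc.2.1).trans h3,
    (SCong.symm hc.2.2).trans h4⟩

/-- Measurability of sets defined by a congruence-closed predicate, and of complements. -/
theorem measClosedPred {α : Type*} [MeasurableSpace α] [CongCl α] [Countable α]
    {Φ : α → Prop} (h : ∀ a b, Φ a → rel a b → Φ b) :
    MeasurableSet {a | Φ a} ∧ MeasurableSet {a | ¬ Φ a} := by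
  constructor
  · exact measurableSet_of_closed fun a ha b hab => h a b ha hab
  · refine measurableSet_of_closed fun a ha b hab hb => ha (h b a hb (rsymm hab))

end Res

section MeasHelpers

open MeasureTheory

theorem exists_not_null {α : Type*} [MeasurableSpace α] (μ : Measure α) {S N : Set α}
    (hN : μ N = 0) (hS : μ S ≠ 0) : ∃ x ∈ S, x ∉ N := by
  by_contra h
  push_neg at h
  exact hS (le_antisymm ((measure_mono h).trans hN.le) (zero_le))

theorem prod_null_of {α β : Type*} [MeasurableSpace α] [MeasurableSpace β]
    (μ : Measure α) (ν : Measure β) [SFinite ν] {A : Set α} {B : Set β} {N : Set (α × β)}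
    (hA : μ {a | a ∉ A} = 0) (hB : ν {b | b ∉ B} = 0)
    (hN : ∀ a ∈ A, ∀ b ∈ B, (a, b) ∉ N) : μ.prod ν N = 0 := by
  have hsub : N ⊆ {a | a ∉ A} ×ˢ (Set.univ : Set β) ∪ (Set.univ : Set α) ×ˢ {b | b ∉ B} := by
    rintro ⟨a, b⟩ hab
    by_cases ha : a ∈ A
    · by_cases hb : b ∈ B
      · exact absurd hab (hN a ha b hb)
      · exact Or.inr ⟨trivial, hb⟩
    · exact Or.inl ⟨ha, trivial⟩
  refine le_antisymm ?_ (zero_le)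
  calc μ.prod ν N ≤ μ.prod ν ({a | a ∉ A} ×ˢ Set.univ) + μ.prod ν (Set.univ ×ˢ {b | b ∉ B}) :=
        (measure_mono hsub).trans (measure_union_le _ _)
    _ = 0 := by rw [Measure.prod_prod, Measure.prod_prod, hA, hB, zero_mul, mul_zero, add_zero]

end MeasHelpers

section Prop1

/-! Propagation of membrane residuals through parallel composition. -/

theorem PhagoRes.parL {n σ ρ} (τ : Membrane) (h : PhagoRes n σ ρ) :
    PhagoRes n (σ.par τ) (ρ.par τ) :=
  let ⟨s, s₀, h1, h2⟩ := h
  ⟨s, s₀.par τ, (h1.parCongr (MCong.refl τ)).trans (MCong.assoc' _ _ _),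
    (h2.parCongr (MCong.refl τ)).trans (MCong.assoc' _ _ _)⟩

theorem PhagoRes.parR {n τ ρ} (σ : Membrane) (h : PhagoRes n τ ρ) :
    PhagoRes n (σ.par τ) (ρ.par σ) :=
  let ⟨s, s₀, h1, h2⟩ := h
  ⟨s, s₀.par σ, ((MCong.parComm σ τ).trans (h1.parCongr (MCong.refl σ))).trans
      (MCong.assoc' _ _ _),
    (h2.parCongr (MCong.refl σ)).trans (MCong.assoc' _ _ _)⟩

theorem ExoRes.parL {n σ ρ} (τ : Membrane) (h : ExoRes n σ ρ) :
    ExoRes n (σ.par τ) (ρ.par τ) :=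
  let ⟨s, s₀, h1, h2⟩ := h
  ⟨s, s₀.par τ, (h1.parCongr (MCong.refl τ)).trans (MCong.assoc' _ _ _),
    (h2.parCongr (MCong.refl τ)).trans (MCong.assoc' _ _ _)⟩

theorem ExoRes.parR {n τ ρ} (σ : Membrane) (h : ExoRes n τ ρ) :
    ExoRes n (σ.par τ) (ρ.par σ) :=
  let ⟨s, s₀, h1, h2⟩ := h
  ⟨s, s₀.par σ, ((MCong.parComm σ τ).trans (h1.parCongr (MCong.refl σ))).trans
      (MCong.assoc' _ _ _),
    (h2.parCongr (MCong.refl σ)).trans (MCong.assoc' _ _ _)⟩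

theorem CoexoRes.parL {n σ ρ} (τ : Membrane) (h : CoexoRes n σ ρ) :
    CoexoRes n (σ.par τ) (ρ.par τ) :=
  let ⟨s, s₀, h1, h2⟩ := h
  ⟨s, s₀.par τ, (h1.parCongr (MCong.refl τ)).trans (MCong.assoc' _ _ _),
    (h2.parCongr (MCong.refl τ)).trans (MCong.assoc' _ _ _)⟩

theorem CoexoRes.parR {n τ ρ} (σ : Membrane) (h : CoexoRes n τ ρ) :
    CoexoRes n (σ.par τ) (ρ.par σ) :=
  let ⟨s, s₀, h1, h2⟩ := h
  ⟨s, s₀.par σ, ((MCong.parComm σ τ).trans (h1.parCongr (MCong.refl σ))).trans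
      (MCong.assoc' _ _ _),
    (h2.parCongr (MCong.refl σ)).trans (MCong.assoc' _ _ _)⟩

theorem CophRes.parL {n σ p} (τ : Membrane) (h : CophRes n σ p) :
    CophRes n (σ.par τ) (p.1.par τ, p.2) :=
  let ⟨r, s, s₀, h1, h2, h3⟩ := h
  ⟨r, s, s₀.par τ, (h1.parCongr (MCong.refl τ)).trans (MCong.assoc' _ _ _),
    (h2.parCongr (MCong.refl τ)).trans (MCong.assoc' _ _ _), h3⟩

theorem CophRes.parR {n τ p} (σ : Membrane) (h : CophRes n τ p) :
    CophRes n (σ.par τ) (p.1.par σ, p.2) :=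
  let ⟨r, s, s₀, h1, h2, h3⟩ := h
  ⟨r, s, s₀.par σ, ((MCong.parComm σ τ).trans (h1.parCongr (MCong.refl σ))).trans
      (MCong.assoc' _ _ _),
    (h2.parCongr (MCong.refl σ)).trans (MCong.assoc' _ _ _), h3⟩

theorem PinoRes.parL {n σ p} (τ : Membrane) (h : PinoRes n σ p) :
    PinoRes n (σ.par τ) (p.1.par τ, p.2) :=
  let ⟨r, s, s₀, h1, h2, h3⟩ := h
  ⟨r, s, s₀.par τ, (h1.parCongr (MCong.refl τ)).trans (MCong.assoc' _ _ _),
    (h2.parCongr (MCong.refl τ)).trans (MCong.assoc' _ _ _), h3⟩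

theorem PinoRes.parR {n τ p} (σ : Membrane) (h : PinoRes n τ p) :
    PinoRes n (σ.par τ) (p.1.par σ, p.2) :=
  let ⟨r, s, s₀, h1, h2, h3⟩ := h
  ⟨r, s, s₀.par σ, ((MCong.parComm σ τ).trans (h1.parCongr (MCong.refl σ))).trans
      (MCong.assoc' _ _ _),
    (h2.parCongr (MCong.refl σ)).trans (MCong.assoc' _ _ _), h3⟩

end Prop1

section MoreHelpers

open MeasureTheory

theorem map_add_null {α β : Type*} [MeasurableSpace α] [MeasurableSpace β]
    {μ1 μ2 : Measure α} {f g : α → β} {A B : Set α} {N : Set β}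
    (hf : Measurable f) (hg : Measurable g) (hN : MeasurableSet N)
    (hsub1 : f ⁻¹' N ⊆ A) (hsub2 : g ⁻¹' N ⊆ B) (h1 : μ1 A = 0) (h2 : μ2 B = 0) :
    (μ1.map f + μ2.map g) N = 0 := by
  rw [Measure.add_apply, Measure.map_apply hf hN, Measure.map_apply hg hN,
    measure_mono_null hsub1 h1, measure_mono_null hsub2 h2, add_zero]

theorem smul_dirac_null {α : Type*} [MeasurableSpace α] (c : ℝ≥0∞) {a : α} {N : Set α}
    (hN : MeasurableSet N) (ha : a ∉ N) : (c • Measure.dirac a) N = 0 := by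
  rw [Measure.smul_apply, Measure.dirac_apply' _ hN, Set.indicator_of_notMem ha, smul_zero]

theorem map_null {α β : Type*} [MeasurableSpace α] [MeasurableSpace β]
    {μ : Measure α} {f : α → β} {A : Set α} {N : Set β}
    (hf : Measurable f) (hN : MeasurableSet N)
    (hsub : f ⁻¹' N ⊆ A) (h : μ A = 0) : μ.map f N = 0 := by
  rw [Measure.map_apply hf hN, measure_mono_null hsub h]

end MoreHelpers

section MemNull

open MeasureTheory CongCl

theorem measNot_phagoRes (n : Name) (σ : Membrane) :
    MeasurableSet {ρ | ¬ PhagoRes n σ ρ} :=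
  (measClosedPred fun _ _ ha hab => ha.closed hab).2

theorem measNot_exoRes (n : Name) (σ : Membrane) :
    MeasurableSet {ρ | ¬ ExoRes n σ ρ} :=
  (measClosedPred fun _ _ ha hab => ha.closed hab).2

theorem measNot_coexoRes (n : Name) (σ : Membrane) :
    MeasurableSet {ρ | ¬ CoexoRes n σ ρ} :=
  (measClosedPred fun _ _ ha hab => ha.closed hab).2

theorem measNot_cophRes (n : Name) (σ : Membrane) :
    MeasurableSet {p | ¬ CophRes n σ p} :=
  (measClosedPred fun _ _ ha hab => ha.closed hab).2

theorem measNot_pinoRes (n : Name) (σ : Membrane) :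
    MeasurableSet {p | ¬ PinoRes n σ p} :=
  (measClosedPred fun _ _ ha hab => ha.closed hab).2

theorem measurable_parApp (τ : Membrane) : Measurable (fun ρ : Membrane => ρ.par τ) :=
  measurable_of_resp_mcong fun _ _ h => MCong.parCongr h (MCong.refl τ)

theorem measurable_parApp2 (τ : Membrane) :
    Measurable (fun p : Membrane × Membrane => (p.1.par τ, p.2)) :=
  Measurable.prodMk ((measurable_parApp τ).comp measurable_fst) measurable_snd

variable {ι : Name → ℝ≥0∞}

theorem null_mphago {σ ν} (h : MTrans ι σ ν) (n : Name) :
    ν (.phago n) {ρ | ¬ PhagoRes n σ ρ} = 0 := by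
  induction h with
  | zero => simp
  | @phago m s =>
      simp only [phagoMeas]
      by_cases hm : m = n
      · subst hm
        simp only [↓reduceIte]
        exact smul_dirac_null _ (measNot_phagoRes m _)
          (fun hs => hs ⟨s, .zero, (MCong.parZero _).symm, (MCong.parZero _).symm⟩)
      · simp [hm]
  | exo => simp [exoMeas]
  | coexo => simp [coexoMeas]
  | cophago => simp [cophagoMeas]
  | pino => simp [pinoMeas]
  | @par σ' τ' μ μ' h1 h2 ih1 ih2 =>
      simp only [mpar]
      exact map_add_null (measurable_parApp τ') (measurable_parApp σ')
        (measNot_phagoRes n _)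
        (fun ρ hρ (hr : PhagoRes n σ' ρ) => hρ (hr.parL τ'))
        (fun ρ hρ (hr : PhagoRes n τ' ρ) => hρ (hr.parR σ'))
        ih1 ih2

theorem null_mexo {σ ν} (h : MTrans ι σ ν) (n : Name) :
    ν (.exo n) {ρ | ¬ ExoRes n σ ρ} = 0 := by
  induction h with
  | zero => simp
  | @exo m s =>
      simp only [exoMeas]
      by_cases hm : m = n
      · subst hm
        simp only [↓reduceIte]
        exact smul_dirac_null _ (measNot_exoRes m _)
          (fun hs => hs ⟨s, .zero, (MCong.parZero _).symm, (MCong.parZero _).symm⟩)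
      · simp [hm]
  | phago => simp [phagoMeas]
  | coexo => simp [coexoMeas]
  | cophago => simp [cophagoMeas]
  | pino => simp [pinoMeas]
  | @par σ' τ' μ μ' h1 h2 ih1 ih2 =>
      simp only [mpar]
      exact map_add_null (measurable_parApp τ') (measurable_parApp σ')
        (measNot_exoRes n _)
        (fun ρ hρ (hr : ExoRes n σ' ρ) => hρ (hr.parL τ'))
        (fun ρ hρ (hr : ExoRes n τ' ρ) => hρ (hr.parR σ'))
        ih1 ih2

theorem null_mcoexo {σ ν} (h : MTrans ι σ ν) (n : Name) :
    ν (.coexo n) {ρ | ¬ CoexoRes n σ ρ} = 0 := by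
  induction h with
  | zero => simp
  | @coexo m s =>
      simp only [coexoMeas]
      by_cases hm : m = n
      · subst hm
        simp only [↓reduceIte]
        exact smul_dirac_null _ (measNot_coexoRes m _)
          (fun hs => hs ⟨s, .zero, (MCong.parZero _).symm, (MCong.parZero _).symm⟩)
      · simp [hm]
  | phago => simp [phagoMeas]
  | exo => simp [exoMeas]
  | cophago => simp [cophagoMeas]
  | pino => simp [pinoMeas]
  | @par σ' τ' μ μ' h1 h2 ih1 ih2 =>
      simp only [mpar]
      exact map_add_null (measurable_parApp τ') (measurable_parApp σ')
        (measNot_coexoRes n _)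
        (fun ρ hρ (hr : CoexoRes n σ' ρ) => hρ (hr.parL τ'))
        (fun ρ hρ (hr : CoexoRes n τ' ρ) => hρ (hr.parR σ'))
        ih1 ih2

theorem null_mcoph {σ ν} (h : MTrans ι σ ν) (n : Name) :
    ν (.cophago n) {p | ¬ CophRes n σ p} = 0 := by
  induction h with
  | zero => simp
  | @cophago m r s =>
      simp only [cophagoMeas]
      by_cases hm : m = n
      · subst hm
        simp only [↓reduceIte]
        exact smul_dirac_null _ (measNot_cophRes m _)
          (fun hs => hs ⟨r, s, .zero, (MCong.parZero _).symm, (MCong.parZero _).symm,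
            MCong.refl r⟩)
      · simp [hm]
  | phago => simp [phagoMeas]
  | exo => simp [exoMeas]
  | coexo => simp [coexoMeas]
  | pino => simp [pinoMeas]
  | @par σ' τ' μ μ' h1 h2 ih1 ih2 =>
      simp only [mpar]
      exact map_add_null (measurable_parApp2 τ') (measurable_parApp2 σ')
        (measNot_cophRes n _)
        (fun p hp (hr : CophRes n σ' p) => hp (hr.parL τ'))
        (fun p hp (hr : CophRes n τ' p) => hp (hr.parR σ'))
        ih1 ih2

theorem null_mpino {σ ν} (h : MTrans ι σ ν) (n : Name) :
    ν (.pino n) {p | ¬ PinoRes n σ p} = 0 := by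
  induction h with
  | zero => simp
  | @pino m r s =>
      simp only [pinoMeas]
      by_cases hm : m = n
      · subst hm
        simp only [↓reduceIte]
        exact smul_dirac_null _ (measNot_pinoRes m _)
          (fun hs => hs ⟨r, s, .zero, (MCong.parZero _).symm, (MCong.parZero _).symm,
            MCong.refl r⟩)
      · simp [hm]
  | phago => simp [phagoMeas]
  | exo => simp [exoMeas]
  | coexo => simp [coexoMeas]
  | cophago => simp [cophagoMeas]
  | @par σ' τ' μ μ' h1 h2 ih1 ih2 =>
      simp only [mpar]
      exact map_add_null (measurable_parApp2 τ') (measurable_parApp2 σ')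
        (measNot_pinoRes n _)
        (fun p hp (hr : PinoRes n σ' p) => hp (hr.parL τ'))
        (fun p hp (hr : PinoRes n τ' p) => hp (hr.parR σ'))
        ih1 ih2

end MemNull

section SysMeasurable

open MeasureTheory CongCl

theorem measurable_compApp (Q : System) : Measurable fun R : System => R.comp Q :=
  measurable_of_resp_scong fun _ _ h => SCong.comp Q h

theorem measurable_cellApp (σ : Membrane) : Measurable fun R : System => System.cell σ R :=
  measurable_of_resp_scong fun _ _ h => SCong.cell (MCong.refl σ) h

theorem measurable_phMap (Q : System) :
    Measurable fun p : System × System => (p.1, p.2.comp Q) :=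
  Measurable.prodMk measurable_fst ((measurable_compApp Q).comp measurable_snd)

theorem measurable_phBMap (Q : System) :
    Measurable fun p : Membrane × Membrane × System × System =>
      (p.1, p.2.1, p.2.2.1, p.2.2.2.comp Q) :=
  Measurable.prodMk measurable_fst (Measurable.prodMk (measurable_fst.comp measurable_snd)
    (Measurable.prodMk (measurable_fst.comp (measurable_snd.comp measurable_snd))
      ((measurable_compApp Q).comp
        (measurable_snd.comp (measurable_snd.comp measurable_snd)))))

theorem measurable_exMap (Q : System) :
    Measurable fun p : Membrane × System × System => (p.1, p.2.1, p.2.2.comp Q) :=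
  Measurable.prodMk measurable_fst (Measurable.prodMk (measurable_fst.comp measurable_snd)
    ((measurable_compApp Q).comp (measurable_snd.comp measurable_snd)))

theorem measurable_pinoMap (P : System) :
    Measurable fun p : Membrane × Membrane =>
      System.cell p.1 ((System.cell p.2 System.void).comp P) :=
  measurable_of_resp_scong fun a b (h : MCong a.1 b.1 ∧ MCong a.2 b.2) =>
    SCong.cell h.1 (SCong.compCongr (SCong.cell h.2 (SCong.refl _)) (SCong.refl P))

theorem measurable_exoMap :
    Measurable fun q : (Membrane × System × System) × Membrane =>
      (System.cell (q.1.1.par q.2) q.1.2.2).comp q.1.2.1 :=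
  measurable_of_resp_scong fun a b
      (h : (MCong a.1.1 b.1.1 ∧ SCong a.1.2.1 b.1.2.1 ∧ SCong a.1.2.2 b.1.2.2) ∧
        MCong a.2 b.2) =>
    SCong.compCongr (SCong.cell (MCong.parCongr h.1.1 h.2) h.1.2.2) h.1.2.1

theorem measurable_phagoMapL :
    Measurable fun q : (System × System) × (Membrane × Membrane × System × System) =>
      (System.cell q.2.1 ((System.cell q.2.2.1 q.1.1).comp q.2.2.2.1)).comp
        (q.1.2.comp q.2.2.2.2) :=
  measurable_of_resp_scong fun a b
      (h : (SCong a.1.1 b.1.1 ∧ SCong a.1.2 b.1.2) ∧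
        (MCong a.2.1 b.2.1 ∧ MCong a.2.2.1 b.2.2.1 ∧ SCong a.2.2.2.1 b.2.2.2.1 ∧
          SCong a.2.2.2.2 b.2.2.2.2)) =>
    SCong.compCongr
      (SCong.cell h.2.1 (SCong.compCongr (SCong.cell h.2.2.1 h.1.1) h.2.2.2.1))
      (SCong.compCongr h.1.2 h.2.2.2.2)

theorem measurable_phagoMapR :
    Measurable fun q : (Membrane × Membrane × System × System) × (System × System) =>
      (System.cell q.1.1 ((System.cell q.1.2.1 q.2.1).comp q.1.2.2.1)).comp
        (q.1.2.2.2.comp q.2.2) :=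
  measurable_of_resp_scong fun a b
      (h : (MCong a.1.1 b.1.1 ∧ MCong a.1.2.1 b.1.2.1 ∧ SCong a.1.2.2.1 b.1.2.2.1 ∧
          SCong a.1.2.2.2 b.1.2.2.2) ∧ (SCong a.2.1 b.2.1 ∧ SCong a.2.2 b.2.2)) =>
    SCong.compCongr
      (SCong.cell h.1.1 (SCong.compCongr (SCong.cell h.1.2.1 h.2.1) h.1.2.2.1))
      (SCong.compCongr h.1.2.2.2 h.2.2)

end SysMeasurable

section Fin

open MeasureTheory

theorem zero_univ_fin {α : Type*} [MeasurableSpace α] : (0 : Measure α) Set.univ ≠ ⊤ := by simp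

theorem smul_dirac_fin {α : Type*} [MeasurableSpace α] {c : ℝ≥0∞} (hc : c ≠ ⊤) (a : α) :
    (c • Measure.dirac a) Set.univ ≠ ⊤ := by
  rw [Measure.smul_apply, measure_univ, smul_eq_mul, mul_one]; exact hc

theorem map_fin {α β : Type*} [MeasurableSpace α] [MeasurableSpace β] {μ : Measure α}
    {f : α → β} (hf : Measurable f) (h : μ Set.univ ≠ ⊤) : μ.map f Set.univ ≠ ⊤ := by
  rw [Measure.map_apply hf .univ, Set.preimage_univ]; exact h

theorem map_add_fin {α β : Type*} [MeasurableSpace α] [MeasurableSpace β]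
    {μ1 μ2 : Measure α} {f g : α → β} (hf : Measurable f) (hg : Measurable g)
    (h1 : μ1 Set.univ ≠ ⊤) (h2 : μ2 Set.univ ≠ ⊤) :
    (μ1.map f + μ2.map g) Set.univ ≠ ⊤ := by
  rw [Measure.add_apply]
  exact ENNReal.add_ne_top.2 ⟨map_fin hf h1, map_fin hg h2⟩

theorem prod_fin {α β : Type*} [MeasurableSpace α] [MeasurableSpace β]
    (μ : Measure α) (ν : Measure β) [SFinite ν]
    (h1 : μ Set.univ ≠ ⊤) (h2 : ν Set.univ ≠ ⊤) : (μ.prod ν) Set.univ ≠ ⊤ := by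
  rw [← Set.univ_prod_univ, Measure.prod_prod]
  exact ENNReal.mul_ne_top h1 h2

variable {ι : Name → ℝ≥0∞}

theorem mfin (hι : ∀ n, ι n ≠ ⊤) {σ ν} (h : MTrans ι σ ν) (a : MLabel) :
    ν a Set.univ ≠ ⊤ := by
  induction h with
  | zero => simp
  | @phago m s =>
      cases a <;> simp only [phagoMeas] <;>
        first
          | exact zero_univ_fin
          | (split_ifs with hm
             · simp only [hm, ↓reduceIte]; exact smul_dirac_fin (hι _) _
             · simp only [hm, ↓reduceIte]; exact zero_univ_fin)
  | @exo m s =>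
      cases a <;> simp only [exoMeas] <;>
        first
          | exact zero_univ_fin
          | (split_ifs with hm
             · simp only [hm, ↓reduceIte]; exact smul_dirac_fin (hι _) _
             · simp only [hm, ↓reduceIte]; exact zero_univ_fin)
  | @coexo m s =>
      cases a <;> simp only [coexoMeas] <;>
        first
          | exact zero_univ_fin
          | (split_ifs with hm
             · simp only [hm, ↓reduceIte]; exact smul_dirac_fin (hι _) _
             · simp only [hm, ↓reduceIte]; exact zero_univ_fin)
  | @cophago m r s =>
      cases a <;> simp only [cophagoMeas] <;>
        first
          | exact zero_univ_fin
          | (split_ifs with hm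
             · simp only [hm, ↓reduceIte]; exact smul_dirac_fin (hι _) _
             · simp only [hm, ↓reduceIte]; exact zero_univ_fin)
  | @pino m r s =>
      cases a <;> simp only [pinoMeas] <;>
        first
          | exact zero_univ_fin
          | (split_ifs with hm
             · simp only [hm, ↓reduceIte]; exact smul_dirac_fin (hι _) _
             · simp only [hm, ↓reduceIte]; exact zero_univ_fin)
  | @par σ' τ' μ μ' h1 h2 ih1 ih2 =>
      cases a <;> simp only [mpar] <;>
        first
          | exact map_add_fin (measurable_parApp τ') (measurable_parApp σ') ih1 ih2
          | exact map_add_fin (measurable_parApp2 τ') (measurable_parApp2 σ') ih1 ih2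

theorem sfin_ph (hι : ∀ n, ι n ≠ ⊤) {P μ} (h : STrans ι P μ) (n : Name) :
    μ (.ph n) Set.univ ≠ ⊤ := by
  induction h with
  | void => simp
  | @cell σ P' ν μ' hm hs ih =>
      simp only [mnest]
      exact smul_dirac_fin
        (ne_top_of_le_ne_top (mfin hι hm (.phago n)) (measure_mono (Set.subset_univ _))) _
  | @comp P' Q' μ₁ μ₂ h1 h2 ih1 ih2 =>
      simp only [mcomp]
      exact map_add_fin (measurable_phMap Q') (measurable_phMap P') ih1 ih2

theorem sfin_phB (hι : ∀ n, ι n ≠ ⊤) {P μ} (h : STrans ι P μ) (n : Name) :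
    μ (.phB n) Set.univ ≠ ⊤ := by
  induction h with
  | void => simp
  | @cell σ P' ν μ' hm hs ih =>
      simp only [mnest]
      exact map_fin MeasurableEquiv.prodAssoc.measurable
        (prod_fin _ _ (mfin hι hm (.cophago n)) (by simp))
  | @comp P' Q' μ₁ μ₂ h1 h2 ih1 ih2 =>
      simp only [mcomp]
      exact map_add_fin (measurable_phBMap Q') (measurable_phBMap P') ih1 ih2

theorem sfin_ex (hι : ∀ n, ι n ≠ ⊤) {P μ} (h : STrans ι P μ) (n : Name) :
    μ (.ex n) Set.univ ≠ ⊤ := by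
  induction h with
  | void => simp
  | @cell σ P' ν μ' hm hs ih =>
      simp only [mnest]
      exact prod_fin _ _ (mfin hι hm (.exo n)) (by simp)
  | @comp P' Q' μ₁ μ₂ h1 h2 ih1 ih2 =>
      simp only [mcomp]
      exact map_add_fin (measurable_exMap Q') (measurable_exMap P') ih1 ih2

end Fin

section SysNull

open MeasureTheory CongCl

theorem dirac_null {α : Type*} [MeasurableSpace α] {a : α} {N : Set α}
    (hN : MeasurableSet N) (ha : a ∉ N) : Measure.dirac a N = 0 := by
  rw [Measure.dirac_apply' _ hN, Set.indicator_of_notMem ha]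

theorem measNot_phRes (n : Name) (P : System) : MeasurableSet {p | ¬ PhRes n P p} :=
  (measClosedPred fun _ _ ha hab => ha.closed hab).2

theorem measNot_phBRes (n : Name) (P : System) : MeasurableSet {q | ¬ PhBRes n P q} :=
  (measClosedPred fun _ _ ha hab => ha.closed hab).2

theorem measNot_exRes (n : Name) (P : System) : MeasurableSet {q | ¬ ExRes n P q} :=
  (measClosedPred fun _ _ ha hab => ha.closed hab).2

theorem measNot_react (P : System) : MeasurableSet {Q | ¬ React P Q} :=
  (measClosedPred fun _ _ ha hab => React.equiv (SCong.refl P) ha hab).2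

theorem PhRes.compL {n P p} (Q : System) (h : PhRes n P p) :
    PhRes n (P.comp Q) (p.1, p.2.comp Q) :=
  let ⟨s, s₀, M, R, h1, h2, h3⟩ := h
  ⟨s, s₀, M, R.comp Q, (SCong.compCongr h1 (SCong.refl Q)).trans (SCong.assoc' _ _ _),
    h2, SCong.compCongr h3 (SCong.refl Q)⟩

theorem PhRes.compR {n Q p} (P : System) (h : PhRes n Q p) :
    PhRes n (P.comp Q) (p.1, p.2.comp P) :=
  let ⟨s, s₀, M, R, h1, h2, h3⟩ := h
  ⟨s, s₀, M, R.comp P, (SCong.compComm P Q).trans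
      ((SCong.compCongr h1 (SCong.refl P)).trans (SCong.assoc' _ _ _)),
    h2, SCong.compCongr h3 (SCong.refl P)⟩

theorem PhBRes.compL {n P q} (Q : System) (h : PhBRes n P q) :
    PhBRes n (P.comp Q) (q.1, q.2.1, q.2.2.1, q.2.2.2.comp Q) :=
  let ⟨r, s, s₀, M, R, h1, h2, h3, h4, h5⟩ := h
  ⟨r, s, s₀, M, R.comp Q, (SCong.compCongr h1 (SCong.refl Q)).trans (SCong.assoc' _ _ _),
    h2, h3, h4, SCong.compCongr h5 (SCong.refl Q)⟩

theorem PhBRes.compR {n Q q} (P : System) (h : PhBRes n Q q) :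
    PhBRes n (P.comp Q) (q.1, q.2.1, q.2.2.1, q.2.2.2.comp P) :=
  let ⟨r, s, s₀, M, R, h1, h2, h3, h4, h5⟩ := h
  ⟨r, s, s₀, M, R.comp P, (SCong.compComm P Q).trans
      ((SCong.compCongr h1 (SCong.refl P)).trans (SCong.assoc' _ _ _)),
    h2, h3, h4, SCong.compCongr h5 (SCong.refl P)⟩

theorem ExRes.compL {n P q} (Q : System) (h : ExRes n P q) :
    ExRes n (P.comp Q) (q.1, q.2.1, q.2.2.comp Q) :=
  let ⟨s, s₀, M, R, h1, h2, h3, h4⟩ := h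
  ⟨s, s₀, M, R.comp Q, (SCong.compCongr h1 (SCong.refl Q)).trans (SCong.assoc' _ _ _),
    h2, h3, SCong.compCongr h4 (SCong.refl Q)⟩

theorem ExRes.compR {n Q q} (P : System) (h : ExRes n Q q) :
    ExRes n (P.comp Q) (q.1, q.2.1, q.2.2.comp P) :=
  let ⟨s, s₀, M, R, h1, h2, h3, h4⟩ := h
  ⟨s, s₀, M, R.comp P, (SCong.compComm P Q).trans
      ((SCong.compCongr h1 (SCong.refl P)).trans (SCong.assoc' _ _ _)),
    h2, h3, SCong.compCongr h4 (SCong.refl P)⟩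

variable {ι : Name → ℝ≥0∞}

theorem null_sph {P μ} (h : STrans ι P μ) (n : Name) :
    μ (.ph n) {p | ¬ PhRes n P p} = 0 := by
  induction h with
  | void => simp
  | @cell σ Pin ν μ' hm hs ih =>
      simp only [mnest]
      by_cases hc : ν (.phago n) (mcls σ) = 0
      · rw [hc, zero_smul]; rfl
      · obtain ⟨ρ, hρ, hres⟩ := exists_not_null _ (null_mphago hm n) hc
        obtain ⟨s, s₀, h1, h2⟩ := not_not.mp hres
        refine smul_dirac_null _ (measNot_phRes n _) (fun hbad => hbad ?_)
        exact ⟨s, s₀, Pin, .void,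
          (SCong.cell h1 (SCong.refl Pin)).trans (SCong.compVoid _).symm,
          SCong.cell (hρ.trans h2) (SCong.refl Pin), SCong.refl _⟩
  | @comp P' Q' μ₁ μ₂ h1 h2 ih1 ih2 =>
      simp only [mcomp]
      exact map_add_null (measurable_phMap Q') (measurable_phMap P') (measNot_phRes n _)
        (fun p hp (hr : PhRes n P' p) => hp (hr.compL Q'))
        (fun p hp (hr : PhRes n Q' p) => hp (hr.compR P')) ih1 ih2

theorem null_sphB {P μ} (h : STrans ι P μ) (n : Name) :
    μ (.phB n) {q | ¬ PhBRes n P q} = 0 := by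
  induction h with
  | void => simp
  | @cell σ Pin ν μ' hm hs ih =>
      simp only [mnest]
      refine map_null MeasurableEquiv.prodAssoc.measurable (measNot_phBRes n _)
        (subset_refl _) ?_
      refine prod_null_of _ _ (A := {p | CophRes n σ p})
        (B := {q : System × System | SCong q.1 Pin ∧ SCong q.2 .void})
        (null_mcoph hm n) ?_ ?_
      · refine dirac_null ((measClosedPred (Φ := fun q : System × System =>
          SCong q.1 Pin ∧ SCong q.2 System.void)
          (fun a b ha (hab : SCong a.1 b.1 ∧ SCong a.2 b.2) =>
            ⟨hab.1.symm.trans ha.1, hab.2.symm.trans ha.2⟩)).2) ?_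
        exact not_not_intro ⟨SCong.refl _, SCong.refl _⟩
      · rintro a ⟨r, s, s₀, hσ, ha1, ha2⟩ b ⟨hb1, hb2⟩ hbad
        refine hbad ⟨r, s, s₀, Pin, .void,
          (SCong.cell hσ (SCong.refl Pin)).trans (SCong.compVoid _).symm,
          ha1, ha2, hb1, hb2⟩
  | @comp P' Q' μ₁ μ₂ h1 h2 ih1 ih2 =>
      simp only [mcomp]
      exact map_add_null (measurable_phBMap Q') (measurable_phBMap P') (measNot_phBRes n _)
        (fun q hq (hr : PhBRes n P' q) => hq (hr.compL Q'))
        (fun q hq (hr : PhBRes n Q' q) => hq (hr.compR P')) ih1 ih2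

theorem null_sex {P μ} (h : STrans ι P μ) (n : Name) :
    μ (.ex n) {q | ¬ ExRes n P q} = 0 := by
  induction h with
  | void => simp
  | @cell σ Pin ν μ' hm hs ih =>
      simp only [mnest]
      refine prod_null_of _ _ (A := {ρ | ExoRes n σ ρ})
        (B := {q : System × System | SCong q.1 Pin ∧ SCong q.2 .void})
        (null_mexo hm n) ?_ ?_
      · refine dirac_null ((measClosedPred (Φ := fun q : System × System =>
          SCong q.1 Pin ∧ SCong q.2 System.void)
          (fun a b ha (hab : SCong a.1 b.1 ∧ SCong a.2 b.2) =>
            ⟨hab.1.symm.trans ha.1, hab.2.symm.trans ha.2⟩)).2) ?_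
        exact not_not_intro ⟨SCong.refl _, SCong.refl _⟩
      · rintro ρ ⟨s, s₀, hσ, hρ⟩ b ⟨hb1, hb2⟩ hbad
        refine hbad ⟨s, s₀, Pin, .void,
          (SCong.cell hσ (SCong.refl Pin)).trans (SCong.compVoid _).symm,
          hρ, hb1, hb2⟩
  | @comp P' Q' μ₁ μ₂ h1 h2 ih1 ih2 =>
      simp only [mcomp]
      exact map_add_null (measurable_exMap Q') (measurable_exMap P') (measNot_exRes n _)
        (fun q hq (hr : ExRes n P' q) => hq (hr.compL Q'))
        (fun q hq (hr : ExRes n Q' q) => hq (hr.compR P')) ih1 ih2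

end SysNull

section Main

open MeasureTheory CongCl

theorem smul_null {α : Type*} [MeasurableSpace α] (c : ℝ≥0∞) {μ : Measure α} {N : Set α}
    (h : μ N = 0) : (c • μ) N = 0 := by
  rw [Measure.smul_apply, h, smul_zero]

theorem sum_null {α ι' : Type*} [MeasurableSpace α] {μ : ι' → Measure α} {N : Set α}
    (hN : MeasurableSet N) (h : ∀ i, μ i N = 0) : Measure.sum μ N = 0 := by
  rw [Measure.sum_apply _ hN]
  simp [h]

theorem add3_null {α : Type*} [MeasurableSpace α] {μ1 μ2 μ3 : Measure α} {N : Set α}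
    (h1 : μ1 N = 0) (h2 : μ2 N = 0) (h3 : μ3 N = 0) : (μ1 + μ2 + μ3) N = 0 := by
  rw [Measure.add_apply, Measure.add_apply, h1, h2, h3, add_zero, add_zero]

theorem add4_null {α : Type*} [MeasurableSpace α] {μ1 μ2 μ3 μ4 : Measure α} {N : Set α}
    (h1 : μ1 N = 0) (h2 : μ2 N = 0) (h3 : μ3 N = 0) (h4 : μ4 N = 0) :
    (μ1 + μ2 + μ3 + μ4) N = 0 := by
  rw [Measure.add_apply, Measure.add_apply, Measure.add_apply, h1, h2, h3, h4,
    add_zero, add_zero, add_zero]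

variable {ι : Name → ℝ≥0∞}

theorem null_id (hι : ∀ n : Name, ι n ≠ ⊤) {P μ} (h : STrans ι P μ) :
    μ .id {Q | ¬ React P Q} = 0 := by
  induction h with
  | void => simp
  | @cell σ Pin ν μ' hm hs ih =>
      simp only [mnest]
      refine add3_null ?_ ?_ ?_
      · exact map_null (measurable_cellApp σ) (measNot_react _)
          (A := {Q | ¬ React Pin Q})
          (fun R hR (hr : React Pin R) => hR (React.loc σ hr)) ih
      · refine sum_null (measNot_react _) (fun n => ?_)
        refine map_null (measurable_pinoMap Pin) (measNot_react _)
          (A := {p | ¬ PinoRes n σ p}) ?_ (null_mpino hm n)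
        rintro p hp ⟨r, s, s₀, hσ, h1, h2⟩
        refine hp (React.equiv (SCong.cell hσ (SCong.refl Pin)) React.pino ?_)
        exact SCong.cell h1.symm
          (SCong.compCongr (SCong.cell h2.symm (SCong.refl _)) (SCong.refl Pin))
      · refine sum_null (measNot_react _) (fun n => ?_)
        refine smul_null _ ?_
        refine map_null measurable_exoMap (measNot_react _) (subset_refl _) ?_
        haveI : IsFiniteMeasure (ν (.coexo n)) := ⟨lt_top_iff_ne_top.2 (mfin hι hm _)⟩
        haveI : SFinite (ν (.coexo n)) := inferInstance
        refine @prod_null_of _ _ _ _ _ _ this {q | ExRes n Pin q} {ρ | CoexoRes n σ ρ} _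
          (null_sex hs n) (null_mcoexo hm n) ?_
        rintro q ⟨s, s₀, M, R, hPin, hq1, hq21, hq22⟩ ρ ⟨t, t₀, hσ, hρ⟩ hbad
        refine hbad (React.equiv (SCong.cell hσ hPin) React.exo ?_)
        exact SCong.compCongr
          (SCong.cell (MCong.parCongr hq1 hρ).symm hq22.symm) hq21.symm
  | @comp P' Q' μ₁ μ₂ h1 h2 ih1 ih2 =>
      simp only [mcomp]
      refine add4_null ?_ ?_ ?_ ?_
      · exact map_null (measurable_compApp Q') (measNot_react _)
          (A := {R | ¬ React P' R})
          (fun R hR (hr : React P' R) => hR (React.comp Q' hr)) ih1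
      · exact map_null (measurable_compApp P') (measNot_react _)
          (A := {R | ¬ React Q' R})
          (fun R hR (hr : React Q' R) =>
            hR (React.equiv (SCong.compComm P' Q') (React.comp P' hr) (SCong.refl _))) ih2
      · refine sum_null (measNot_react _) (fun n => ?_)
        refine smul_null _ ?_
        refine map_null measurable_phagoMapL (measNot_react _) (subset_refl _) ?_
        haveI : IsFiniteMeasure (μ₂ (.phB n)) := ⟨lt_top_iff_ne_top.2 (sfin_phB hι h2 n)⟩
        haveI : SFinite (μ₂ (.phB n)) := inferInstance
        refine @prod_null_of _ _ _ _ _ _ this {p | PhRes n P' p} {q | PhBRes n Q' q} _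
          (null_sph h1 n) (null_sphB h2 n) ?_
        rintro q1 ⟨s, s₀, M, R, hP, hq11, hq12⟩
          q2 ⟨r, t, t₀, M', R', hQ, hq21, hq221, hq2221, hq2222⟩ hbad
        refine hbad (React.equiv
          ((SCong.compCongr hP hQ).trans (SCong.exchange' _ R _ R'))
          (React.comp (R.comp R') React.phago) ?_)
        exact SCong.compCongr
          (SCong.cell hq21.symm
            (SCong.compCongr (SCong.cell hq221.symm hq11.symm) hq2221.symm))
          (SCong.compCongr hq12.symm hq2222.symm)
      · refine sum_null (measNot_react _) (fun n => ?_)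
        refine smul_null _ ?_
        refine map_null measurable_phagoMapR (measNot_react _) (subset_refl _) ?_
        haveI : IsFiniteMeasure (μ₂ (.ph n)) := ⟨lt_top_iff_ne_top.2 (sfin_ph hι h2 n)⟩
        haveI : SFinite (μ₂ (.ph n)) := inferInstance
        refine @prod_null_of _ _ _ _ _ _ this {q | PhBRes n P' q} {p | PhRes n Q' p} _
          (null_sphB h1 n) (null_sph h2 n) ?_
        rintro q1 ⟨r, t, t₀, M', R', hP, hq11, hq121, hq1221, hq1222⟩
          q2 ⟨s, s₀, M, R, hQ, hq21, hq22⟩ hbad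
        refine hbad (React.equiv
          ((SCong.compCongr hP hQ).trans (SCong.exchange _ R' _ R))
          (React.comp (R'.comp R) React.phago) ?_)
        exact SCong.compCongr
          (SCong.cell hq11.symm
            (SCong.compCongr (SCong.cell hq121.symm hq21.symm) hq1221.symm))
          (SCong.compCongr hq1222.symm hq22.symm)

end Main
/-- the stochastic semantics is conservative w.r.t. the reduction
semantics: if P → μ and μ_id([Q]) > 0 then P ⟶ Q. -/
theorem stochastic_semantics_conservative (ι : Name → ℝ≥0∞)
    (hι : ∀ n : Name, 0 < ι n ∧ ι n ≠ ⊤) (P Q : System) (μ : SMeas)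
    (h : STrans ι P μ) (hpos : 0 < μ SLabel.id (scls Q)) : React P Q := by
  obtain ⟨Q', hQ', hnr⟩ :=
    exists_not_null _ (null_id (fun n => (hι n).2) h) (by exact fun e => hpos.ne' e)
  exact React.equiv (SCong.refl P) (not_not.mp hnr) (SCong.symm hQ')

end Brane
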